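/- Let F ⊆ ℝ^d be a closed set such that the boundary of the convex hull of F does not contain any ray. Then the convex hull of F is closed, i.e., closure(conv F) = conv F. -/

import Mathlib

open Set Filter Topology Bornology

section helpers
variable {E : Type*} [NormedAddCommGroup E] [NormedSpace ℝ E]

lemma rec_of_tendsto {D : Set E} (hD : Convex ℝ D) (hDc : IsClosed D)
    {μ : ℕ → ℝ} {y : ℕ → E} {v : E}
    (hμ0 : ∀ n, 0 ≤ μ n) (hy : ∀ n, y n ∈ D)
    (hμ : Tendsto μ atTop (𝓝 0))
    (hv : Tendsto (fun n => μ n • y n) atTop (𝓝 v)) :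
    ∀ p ∈ D, ∀ α : ℝ, 0 ≤ α → p + α • v ∈ D := by
  intro p hp α hα
  have hconv : Tendsto (fun n => p + α • (μ n • y n) - (α * μ n) • p) atTop
      (𝓝 (p + α • v - (α * 0) • p)) := by
    exact ((tendsto_const_nhds.add (hv.const_smul α)).sub ((hμ.const_mul α).smul_const p))
  rw [mul_zero, zero_smul, sub_zero] at hconv
  refine hDc.mem_of_tendsto hconv ?_
  have hev : ∀ᶠ n in atTop, α * μ n < 1 := (hμ.const_mul α).eventually_lt_const (by
    rw [mul_zero]; exact one_pos)
  filter_upwards [hev] with n hn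
  have h0 : 0 ≤ α * μ n := mul_nonneg hα (hμ0 n)
  have := hD hp (hy n) (by linarith : (0:ℝ) ≤ 1 - α * μ n) h0 (by ring)
  convert this using 1
  rw [smul_smul]
  module

/-- Translating an interior point by a recession direction stays in the interior. -/


lemma interior_add_rec {D : Set E} {u : E}
    (hrec : ∀ p ∈ D, ∀ α : ℝ, 0 ≤ α → p + α • u ∈ D)
    {q : E} (hq : q ∈ interior D) {α : ℝ} (hα : 0 ≤ α) :
    q + α • u ∈ interior D := by
  have himg : (fun y => y + α • u) '' interior D ⊆ interior D := by
    apply interior_maximal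
    · rintro _ ⟨y, hy, rfl⟩
      exact hrec y (interior_subset hy) α hα
    · exact (Homeomorph.addRight (α • u)).isOpenMap _ isOpen_interior
  exact himg ⟨q, hq, rfl⟩

/-- In finite dimensions, the interior of the closure of a convex set is inside the set. -/


lemma interior_closure_subset_of_convex [FiniteDimensional ℝ E] {C : Set E}
    (hC : Convex ℝ C) : interior (closure C) ⊆ C := by
  by_cases hne : (interior C).Nonempty
  · obtain ⟨x, hx⟩ := hne
    intro y hy
    rcases eq_or_ne y x with rfl | hxy
    · exact interior_subset hx
    obtain ⟨ε, hε, hball⟩ := Metric.isOpen_iff.mp isOpen_interior y hy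
    set δ : ℝ := ε / (2 * ‖y - x‖) with hδdef
    have hyx : (0:ℝ) < ‖y - x‖ := by
      rw [norm_pos_iff, sub_ne_zero]; exact hxy
    have hδ : 0 < δ := by positivity
    set y' : E := y + δ • (y - x) with hy'def
    have hy' : y' ∈ closure C := by
      have : y' ∈ interior (closure C) := by
        apply hball
        rw [Metric.mem_ball, dist_eq_norm]
        have : y' - y = δ • (y - x) := by rw [hy'def]; abel
        rw [this, norm_smul, Real.norm_eq_abs, abs_of_pos hδ, hδdef]
        rw [div_mul_eq_mul_div, mul_comm]
        rw [mul_comm 2 ‖y - x‖, mul_div_assoc]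
        calc ‖y - x‖ * (ε / (‖y - x‖ * 2)) = ε / 2 := by
              field_simp
          _ < ε := by linarith
      exact interior_subset this
    clear hδdef
    clear_value δ
    have h1δ : (0:ℝ) < 1 + δ := by linarith
    have hcombo : (δ / (1 + δ)) • x + (1 / (1 + δ)) • y' = y := by
      have h1δ' : (1:ℝ) + δ ≠ 0 := h1δ.ne'
      rw [hy'def]
      match_scalars <;> field_simp <;> ring
    have : y ∈ interior C := by
      rw [← hcombo]
      exact hC.combo_interior_closure_mem_interior hx hy'
        (by positivity) (by positivity) (by field_simp; ring)
    exact interior_subset this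
  · rw [Set.not_nonempty_iff_eq_empty] at hne
    have hspan : affineSpan ℝ C ≠ ⊤ := by
      intro h
      have := hC.interior_nonempty_iff_affineSpan_eq_top.mpr h
      rw [hne] at this
      exact Set.not_nonempty_empty this
    have hsub : closure C ⊆ (affineSpan ℝ C : Set E) :=
      closure_minimal (subset_affineSpan ℝ C) (affineSpan ℝ C).closed_of_finiteDimensional
    intro y hy
    exfalso
    have hyint : y ∈ interior ((affineSpan ℝ C : Set E)) := interior_mono hsub hy
    have : affineSpan ℝ ((affineSpan ℝ C : Set E)) = ⊤ :=
      ((AffineSubspace.convex _).interior_nonempty_iff_affineSpan_eq_top).mp ⟨y, hyint⟩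
    rw [AffineSubspace.affineSpan_coe] at this
    exact hspan this


lemma sum_dite_pad {M : Type*} [AddCommMonoid M] {k N : ℕ} (hkN : k ≤ N) (f : Fin k → M) :
    (∑ j : Fin N, if h : (j : ℕ) < k then f ⟨j, h⟩ else 0) = ∑ i : Fin k, f i := by
  have h1 : (∑ j : Fin N, if h : (j : ℕ) < k then f ⟨j, h⟩ else 0)
      = ∑ j ∈ Finset.range N, if h : j < k then f ⟨j, h⟩ else 0 :=
    Fin.sum_univ_eq_sum_range (fun j => if h : j < k then f ⟨j, h⟩ else 0) N
  have h2 : (∑ i : Fin k, f i)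
      = ∑ j ∈ Finset.range k, if h : j < k then f ⟨j, h⟩ else 0 := by
    rw [← Fin.sum_univ_eq_sum_range (fun j => if h : j < k then f ⟨j, h⟩ else 0) k]
    exact Finset.sum_congr rfl fun i _ => by simp [i.isLt]
  rw [h1, h2]
  symm
  apply Finset.sum_subset (Finset.range_subset_range.mpr hkN)
  intro j _ hj
  rw [Finset.mem_range] at hj
  rw [dif_neg hj]


lemma cara [FiniteDimensional ℝ E] {F : Set E} {z : E} (hz : z ∈ convexHull ℝ F) :
    ∃ (w : Fin (Module.finrank ℝ E + 1) → ℝ) (x : Fin (Module.finrank ℝ E + 1) → E),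
      (∀ i, 0 ≤ w i) ∧ ∑ i, w i = 1 ∧ (∀ i, x i ∈ F) ∧ ∑ i, w i • x i = z := by
  obtain ⟨ι, fι, p, w, hrange, hindep, hpos, hsum, hrep⟩ :=
    eq_pos_convex_span_of_mem_convexHull hz
  have hne : Nonempty ι := by
    rcases isEmpty_or_nonempty ι with h | h
    · rw [Finset.univ_eq_empty, Finset.sum_empty] at hsum; norm_num at hsum
    · exact h
  have hcard : Fintype.card ι ≤ Module.finrank ℝ E + 1 := by
    rw [← hindep.finrank_vectorSpan_add_one]
    have := Submodule.finrank_le (vectorSpan ℝ (Set.range p))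
    omega
  set k := Fintype.card ι with hk
  have e : Fin k ≃ ι := (Fintype.equivFin ι).symm
  obtain ⟨i₀⟩ := hne
  refine ⟨fun j => if h : (j : ℕ) < k then w (e ⟨j, h⟩) else 0,
    fun j => if h : (j : ℕ) < k then p (e ⟨j, h⟩) else p i₀, fun j => ?_, ?_, fun j => ?_, ?_⟩
  · by_cases h : (j : ℕ) < k
    · simp only [dif_pos h]; exact (hpos _).le
    · simp only [dif_neg h]; exact le_refl 0
  · rw [sum_dite_pad hcard (fun i => w (e i)), Equiv.sum_comp e w, hsum]
  · by_cases h : (j : ℕ) < k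
    · simp only [dif_pos h]; exact hrange ⟨_, rfl⟩
    · simp only [dif_neg h]; exact hrange ⟨_, rfl⟩
  · have key : ∀ j : Fin (Module.finrank ℝ E + 1),
        ((if h : (j : ℕ) < k then w (e ⟨j, h⟩) else 0) •
        (if h : (j : ℕ) < k then p (e ⟨j, h⟩) else p i₀)) =
        (if h : (j : ℕ) < k then w (e ⟨j, h⟩) • p (e ⟨j, h⟩) else 0) := by
      intro j
      by_cases h : (j : ℕ) < k
      · simp only [dif_pos h]
      · simp only [dif_neg h, zero_smul]
    rw [Finset.sum_congr rfl (fun j _ => key j),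
      sum_dite_pad hcard (fun i => w (e i) • p (e i)),
      Equiv.sum_comp e (fun i => w i • p i), hrep]


end helpers

theorem closure_convexHull_of_no_rays_in_frontier
    (d : ℕ) (F : Set (EuclideanSpace ℝ (Fin d))) (hF : IsClosed F)
    (hnoray : ∀ (x e : EuclideanSpace ℝ (Fin d)), e ≠ 0 →
      ¬ ((fun α : ℝ => x + α • e) '' Set.Ici 0 ⊆ frontier (convexHull ℝ F))) :
    closure (convexHull ℝ F) = convexHull ℝ F := by
  classical
  set C := convexHull ℝ F with hCdef
  set D := closure C with hDdef
  refine Subset.antisymm ?_ subset_closure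
  intro z hzD
  by_contra hzC
  have hCconv : Convex ℝ C := convex_convexHull ℝ F
  have hDconv : Convex ℝ D := hCconv.closure
  have hDclosed : IsClosed D := isClosed_closure
  have hCD : C ⊆ D := subset_closure
  have hFC : F ⊆ C := subset_convexHull ℝ F
  have hintDC : interior D ⊆ C := interior_closure_subset_of_convex hCconv
  have hintCD : interior C ⊆ interior D := interior_mono hCD
  obtain ⟨zs, hzsC, hzslim⟩ := mem_closure_iff_seq_limit.mp hzD
  choose ww xx hw0 hw1 hxF hrep using fun n => cara (hzsC n)
  set s : ℕ → ℝ := fun n => 1 + ∑ i, ww n i * ‖xx n i‖ with hsdef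
  have hsum_nonneg : ∀ n, 0 ≤ ∑ i, ww n i * ‖xx n i‖ := fun n =>
    Finset.sum_nonneg fun i _ => mul_nonneg (hw0 n i) (norm_nonneg _)
  have hs1 : ∀ n, 1 ≤ s n := fun n => by
    have := hsum_nonneg n; simp only [hsdef]; linarith
  have hs0 : ∀ n, 0 < s n := fun n => lt_of_lt_of_le one_pos (hs1 n)
  have hsne : ∀ n, s n ≠ 0 := fun n => (hs0 n).ne'
  -- the packed sequence
  set T := ℝ × ((Fin (Module.finrank ℝ (EuclideanSpace ℝ (Fin d)) + 1) → ℝ) × ((Fin (Module.finrank ℝ (EuclideanSpace ℝ (Fin d)) + 1) → ℝ) × (Fin (Module.finrank ℝ (EuclideanSpace ℝ (Fin d)) + 1) → EuclideanSpace ℝ (Fin d)))) with hTdef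
  set P : ℕ → T := fun n =>
    ((s n)⁻¹, ww n, (fun i => ww n i / s n), fun i => (ww n i / s n) • xx n i) with hPdef
  have hwle1 : ∀ n i, ww n i ≤ 1 := fun n i => by
    rw [← hw1 n]
    exact Finset.single_le_sum (fun j _ => hw0 n j) (Finset.mem_univ i)
  have hwxle : ∀ n i, ww n i * ‖xx n i‖ ≤ s n := fun n i => by
    have h1 : ww n i * ‖xx n i‖ ≤ ∑ j, ww n j * ‖xx n j‖ :=
      Finset.single_le_sum (fun j _ => mul_nonneg (hw0 n j) (norm_nonneg _))
        (Finset.mem_univ i)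
    simp only [hsdef]; linarith
  have hbound : ∀ n, ‖P n‖ ≤ 1 := by
    intro n
    rw [Prod.norm_def]
    refine max_le ?_ ?_
    · rw [Real.norm_eq_abs, abs_of_pos (inv_pos.mpr (hs0 n))]
      exact inv_le_one_of_one_le₀ (hs1 n)
    rw [Prod.norm_def]
    refine max_le ?_ ?_
    · refine (pi_norm_le_iff_of_nonneg zero_le_one).mpr fun i => ?_
      rw [Real.norm_eq_abs, abs_of_nonneg (hw0 n i)]
      exact hwle1 n i
    rw [Prod.norm_def]
    refine max_le ?_ ?_
    · refine (pi_norm_le_iff_of_nonneg zero_le_one).mpr fun i => ?_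
      rw [Real.norm_eq_abs, abs_of_nonneg (div_nonneg (hw0 n i) (hs0 n).le),
        div_le_one (hs0 n)]
      exact (hwle1 n i).trans (hs1 n)
    · refine (pi_norm_le_iff_of_nonneg zero_le_one).mpr fun i => ?_
      rw [norm_smul, Real.norm_eq_abs, abs_of_nonneg (div_nonneg (hw0 n i) (hs0 n).le),
        div_mul_eq_mul_div, div_le_one (hs0 n)]
      exact hwxle n i
  haveI : ProperSpace T := FiniteDimensional.proper ℝ T
  obtain ⟨L, -, φ, hφ, hPlim⟩ :=
    tendsto_subseq_of_bounded (Metric.isBounded_closedBall (x := (0 : T)) (r := 1))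
      (fun n => mem_closedBall_zero_iff.mpr (hbound n))
  obtain ⟨σ, lam, mu, v⟩ := L
  have h1 : Tendsto (fun k => (s (φ k))⁻¹) atTop (𝓝 σ) :=
    (continuous_fst.tendsto _).comp hPlim
  have h2 : Tendsto (fun k => ww (φ k)) atTop (𝓝 lam) :=
    ((continuous_fst.comp continuous_snd).tendsto _).comp hPlim
  have h3 : Tendsto (fun k => (fun i => ww (φ k) i / s (φ k))) atTop (𝓝 mu) :=
    ((continuous_fst.comp (continuous_snd.comp continuous_snd)).tendsto _).comp hPlim
  have h4 : Tendsto (fun k => (fun i => (ww (φ k) i / s (φ k)) • xx (φ k) i)) atTop (𝓝 v) :=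
    ((continuous_snd.comp (continuous_snd.comp continuous_snd)).tendsto _).comp hPlim
  have hlam : ∀ i, Tendsto (fun k => ww (φ k) i) atTop (𝓝 (lam i)) :=
    fun i => tendsto_pi_nhds.mp h2 i
  have hmu : ∀ i, Tendsto (fun k => ww (φ k) i / s (φ k)) atTop (𝓝 (mu i)) :=
    fun i => tendsto_pi_nhds.mp h3 i
  have hv : ∀ i, Tendsto (fun k => (ww (φ k) i / s (φ k)) • xx (φ k) i) atTop (𝓝 (v i)) :=
    fun i => tendsto_pi_nhds.mp h4 i
  have hzlim' : Tendsto (fun k => zs (φ k)) atTop (𝓝 z) := hzslim.comp hφ.tendsto_atTop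
  have hσ0 : 0 ≤ σ := ge_of_tendsto' h1 fun k => inv_nonneg.mpr (hs0 _).le
  have hlam0 : ∀ i, 0 ≤ lam i := fun i => ge_of_tendsto' (hlam i) fun k => hw0 _ i
  have hmu0 : ∀ i, 0 ≤ mu i := fun i =>
    ge_of_tendsto' (hmu i) fun k => div_nonneg (hw0 _ i) (hs0 _).le
  have hlamsum : ∑ i, lam i = 1 := by
    refine tendsto_nhds_unique (tendsto_finset_sum _ fun i _ => hlam i) ?_
    have heq : (fun k => ∑ i, ww (φ k) i) = fun _ => (1:ℝ) := funext fun k => hw1 (φ k)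
    rw [heq]; exact tendsto_const_nhds
  have hmusum : ∑ i, mu i = σ := by
    refine tendsto_nhds_unique (tendsto_finset_sum _ fun i _ => hmu i) ?_
    refine h1.congr fun k => ?_
    rw [← Finset.sum_div, hw1, one_div]
  have hvsum : ∑ i, v i = σ • z := by
    refine tendsto_nhds_unique (tendsto_finset_sum _ fun i _ => hv i) ?_
    refine (h1.smul hzlim').congr fun k => ?_
    rw [← hrep (φ k), Finset.smul_sum]
    refine Finset.sum_congr rfl fun i _ => ?_
    rw [smul_smul, div_eq_inv_mul]
  have hnormsum : ∑ i, (mu i + ‖v i‖) = 1 := by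
    refine tendsto_nhds_unique
      (tendsto_finset_sum _ fun i _ => (hmu i).add (hv i).norm) ?_
    have heq : ∀ k : ℕ, ∑ i, (ww (φ k) i / s (φ k) + ‖(ww (φ k) i / s (φ k)) • xx (φ k) i‖)
        = (1:ℝ) := by
      intro k
      have hterm : ∀ i, ww (φ k) i / s (φ k) + ‖(ww (φ k) i / s (φ k)) • xx (φ k) i‖
          = (ww (φ k) i + ww (φ k) i * ‖xx (φ k) i‖) / s (φ k) := by
        intro i
        rw [norm_smul, Real.norm_eq_abs,
          abs_of_nonneg (div_nonneg (hw0 _ i) (hs0 _).le), div_mul_eq_mul_div, ← add_div]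
      rw [Finset.sum_congr rfl fun i _ => hterm i, ← Finset.sum_div,
        Finset.sum_add_distrib, hw1]
      rw [div_eq_one_iff_eq (hsne (φ k)), hsdef]
    exact Tendsto.congr (fun k => (heq k).symm) tendsto_const_nhds
  -- recession machinery
  set Rec : EuclideanSpace ℝ (Fin d) → Prop :=
    fun u => ∀ p ∈ D, ∀ α : ℝ, 0 ≤ α → p + α • u ∈ D with hRecdef
  have hRec_add : ∀ u₁ u₂, Rec u₁ → Rec u₂ → Rec (u₁ + u₂) := by
    intro u₁ u₂ hu₁ hu₂ p hp α hα
    have := hu₂ _ (hu₁ p hp α hα) α hα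
    rwa [smul_add, ← add_assoc]
  have hRec_zero : Rec 0 := by intro p hp α hα; rwa [smul_zero, add_zero]
  have hRec_sum : ∀ (t : Finset (Fin (Module.finrank ℝ (EuclideanSpace ℝ (Fin d)) + 1))) (u : Fin (Module.finrank ℝ (EuclideanSpace ℝ (Fin d)) + 1) → EuclideanSpace ℝ (Fin d)),
      (∀ i ∈ t, Rec (u i)) → Rec (∑ i ∈ t, u i) := fun t u hu =>
    Finset.sum_induction u Rec hRec_add hRec_zero hu
  have hxD : ∀ k i, xx (φ k) i ∈ D := fun k i => hCD (hFC (hxF _ i))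
  -- common final step: a ray through z in direction e lying in the frontier
  have hfinish : ∀ e : EuclideanSpace ℝ (Fin d), e ≠ 0 → Rec e →
      (∀ α : ℝ, 0 ≤ α → z + α • e ∉ interior D) → False := by
    intro e hne hrec hnotint
    refine hnoray z e hne ?_
    rintro - ⟨α, hα, rfl⟩
    rw [mem_Ici] at hα
    exact ⟨hrec z hzD α hα, fun hint => hnotint α hα (hintCD hint)⟩
  by_cases hσ : σ = 0
  · -- case s (φ k) → ∞ : D contains a line through z
    have hmuall : ∀ i, mu i = 0 := fun i =>
      (Finset.sum_eq_zero_iff_of_nonneg (fun j _ => hmu0 j)).mp (hmusum.trans hσ) i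
        (Finset.mem_univ i)
    have hvnorm : ∑ i, ‖v i‖ = 1 := by
      rw [Finset.sum_add_distrib, Finset.sum_congr rfl fun i _ => hmuall i] at hnormsum
      simpa using hnormsum
    have hvsum0 : ∑ i, v i = 0 := by rw [hvsum, hσ, zero_smul]
    obtain ⟨i₀, hi₀⟩ : ∃ i, v i ≠ 0 := by
      by_contra h
      push_neg at h
      rw [Finset.sum_congr rfl fun i _ => by rw [h i, norm_zero]] at hvnorm
      simp at hvnorm
    have hrec_all : ∀ i, Rec (v i) := fun i =>
      rec_of_tendsto hDconv hDclosed (fun k => div_nonneg (hw0 _ i) (hs0 _).le)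
        (fun k => hxD k i) (by rw [← hmuall i]; exact hmu i) (hv i)
    have hrecneg : Rec (-v i₀) := by
      have hsum : ∑ i ∈ Finset.univ.erase i₀, v i = -v i₀ := by
        have h := Finset.add_sum_erase Finset.univ v (Finset.mem_univ i₀)
        rw [hvsum0] at h
        exact eq_neg_of_add_eq_zero_right h
      rw [← hsum]
      exact hRec_sum _ _ fun i _ => hrec_all i
    refine hfinish (v i₀) hi₀ (hrec_all i₀) ?_
    intro α hα hint
    have hz_int : z ∈ interior D := by
      have := interior_add_rec hrecneg hint hα
      rwa [smul_neg, add_assoc, add_neg_cancel, add_zero] at this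
    exact hzC (hintDC hz_int)
  · -- case s (φ k) bounded
    have hσpos : 0 < σ := lt_of_le_of_ne hσ0 (Ne.symm hσ)
    have hslim : Tendsto (fun k => s (φ k)) atTop (𝓝 σ⁻¹) := by
      have := h1.inv₀ hσ
      simpa [inv_inv] using this
    set u : Fin (Module.finrank ℝ (EuclideanSpace ℝ (Fin d)) + 1) → EuclideanSpace ℝ (Fin d) := fun i => σ⁻¹ • v i with hudef
    have hWX : ∀ i, Tendsto (fun k => ww (φ k) i • xx (φ k) i) atTop (𝓝 (u i)) := by
      intro i
      refine (hslim.smul (hv i)).congr fun k => ?_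
      rw [smul_smul]
      congr 1
      field_simp [hsne (φ k)]
    have husum : ∑ i, u i = z := by
      rw [hudef, ← Finset.smul_sum, hvsum, smul_smul, inv_mul_cancel₀ hσ, one_smul]
    set A : Finset (Fin (Module.finrank ℝ (EuclideanSpace ℝ (Fin d)) + 1)) := Finset.univ.filter (fun i => lam i ≠ 0) with hAdef
    have hlamA : ∀ i ∈ A, lam i ≠ 0 := fun i hi => (Finset.mem_filter.mp hi).2
    have hξ : ∀ i ∈ A, ∃ ξ, ξ ∈ F ∧ lam i • ξ = u i := by
      intro i hi
      have hli := hlamA i hi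
      have hxlim : Tendsto (fun k => xx (φ k) i) atTop (𝓝 ((lam i)⁻¹ • u i)) := by
        have t1 := ((hlam i).inv₀ hli).smul (hWX i)
        refine t1.congr' ?_
        filter_upwards [(hlam i).eventually_ne hli] with k hk
        rw [inv_smul_smul₀ hk]
      refine ⟨(lam i)⁻¹ • u i, ?_, smul_inv_smul₀ hli _⟩
      exact hF.mem_of_tendsto hxlim (Eventually.of_forall fun k => hxF _ i)
    choose! ξ hξF hξu using hξ
    have hAsum : ∑ i ∈ A, lam i = 1 := by
      rw [hAdef, Finset.sum_filter_ne_zero, hlamsum]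
    set c : EuclideanSpace ℝ (Fin d) := ∑ i ∈ A, lam i • ξ i with hcdef
    have hcC : c ∈ C := by
      have := A.centerMass_mem_convexHull (fun i hi => hlam0 i)
        (by rw [hAsum]; exact one_pos) (fun i hi => hξF i hi)
      rwa [Finset.centerMass_eq_of_sum_1 _ _ hAsum] at this
    set wv : EuclideanSpace ℝ (Fin d) :=
      ∑ i ∈ Finset.univ.filter (fun i => ¬ lam i ≠ 0), u i with hwvdef
    have hsplit : z = c + wv := by
      rw [hcdef, Finset.sum_congr rfl (fun i hi => hξu i hi), hwvdef, hAdef,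
        Finset.sum_filter_add_sum_filter_not Finset.univ (fun i => lam i ≠ 0) u, husum]
    have hwv_rec : Rec wv := by
      rw [hwvdef]
      refine hRec_sum _ _ fun i hi => ?_
      have hli : lam i = 0 := not_not.mp (Finset.mem_filter.mp hi).2
      exact rec_of_tendsto hDconv hDclosed (fun k => hw0 _ i) (fun k => hxD k i)
        (by rw [← hli]; exact hlam i) (hWX i)
    have hwv_ne : wv ≠ 0 := by
      intro h
      rw [h, add_zero] at hsplit
      exact hzC (hsplit ▸ hcC)
    refine hfinish wv hwv_ne hwv_rec ?_
    intro α hα hint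
    have h1α : (0:ℝ) < 1 + α := by linarith
    have hcombo : (1 / (1 + α)) • (z + α • wv) + (1 - 1 / (1 + α)) • c = z := by
      rw [hsplit]
      match_scalars <;> field_simp <;> ring
    have hz_int : z ∈ interior D := by
      rw [← hcombo]
      refine hDconv.combo_interior_closure_mem_interior hint ?_ (by positivity) ?_ (by ring)
      · rw [hDclosed.closure_eq]; exact hCD hcC
      · have hle : 1 / (1 + α) ≤ 1 := by rw [div_le_one h1α]; linarith
        linarith
    exact hzC (hintDC hz_int)
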